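/- arXiv:2504.13601 — 2 statements merged into one kernel-verified Lean document; each statement's English description precedes it below -/
import Mathlib

section
/- Let A be a real m × n matrix satisfying A·Aᵀ = a·I_m for some a > 0, and let s ≥ 0 and γ > 0 be reals. Then the matrix s·AᵀA + γ·I_n is invertible, and for all vectors p ∈ ℝⁿ and y ∈ ℝᵐ: (s·AᵀA + γ·I_n)^{−1}·(s·Aᵀy + γ·p) = p + (s/(γ + a·s))·Aᵀ·(y − A·p). -/
open Matrix

/-- Simplification of the LMMSE estimator `g₁` when
`A·Aᵀ = a·I` with `a > 0`: for `s ≥ 0` and `γ > 0`, the matrix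
`s·AᵀA + γ·I` is invertible and
`(s·AᵀA + γ·I)⁻¹·(s·Aᵀy + γ·p) = p + (s/(γ+a·s))·Aᵀ·(y − A·p)`. -/
theorem lmmse_row_orthogonal_simplification
    (m n : ℕ) (A : Matrix (Fin m) (Fin n) ℝ)
    (a : ℝ) (ha : 0 < a) (hA : A * Aᵀ = a • (1 : Matrix (Fin m) (Fin m) ℝ))
    (s γ : ℝ) (hs : 0 ≤ s) (hγ : 0 < γ) :
    IsUnit (s • (Aᵀ * A) + γ • (1 : Matrix (Fin n) (Fin n) ℝ)) ∧
    ∀ (p : Fin n → ℝ) (y : Fin m → ℝ),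
      (s • (Aᵀ * A) + γ • (1 : Matrix (Fin n) (Fin n) ℝ))⁻¹ *ᵥ
          (s • (Aᵀ *ᵥ y) + γ • p) =
        p + (s / (γ + a * s)) • (Aᵀ *ᵥ (y - A *ᵥ p)) := by
  have hpos : 0 < γ + a * s := by positivity
  have hne : γ + a * s ≠ 0 := ne_of_gt hpos
  have hγne : γ ≠ 0 := ne_of_gt hγ
  have hne2 : s * a + γ ≠ 0 := by positivity
  set c : ℝ := s / (γ + a * s) with hc
  set B : Matrix (Fin n) (Fin n) ℝ := Aᵀ * A with hB
  have hBB : B * B = a • B := by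
    rw [hB, Matrix.mul_assoc, ← Matrix.mul_assoc A, hA, Matrix.smul_mul,
      Matrix.one_mul, Matrix.mul_smul]
  have hBAT : B * Aᵀ = a • Aᵀ := by
    rw [hB, Matrix.mul_assoc, hA, Matrix.mul_smul, Matrix.mul_one]
  set N : Matrix (Fin n) (Fin n) ℝ := γ⁻¹ • (1 - c • B) with hN
  have hMN : (s • B + γ • (1 : Matrix (Fin n) (Fin n) ℝ)) * N = 1 := by
    rw [hN]
    simp only [Matrix.mul_smul, Matrix.smul_mul, add_mul, mul_add, sub_mul,
      mul_sub, Matrix.mul_one, Matrix.one_mul, hBB]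
    match_scalars <;> (try rw [hc]) <;> field_simp <;> (try ring)
  have hNM : N * (s • B + γ • (1 : Matrix (Fin n) (Fin n) ℝ)) = 1 := by
    rw [hN]
    simp only [Matrix.mul_smul, Matrix.smul_mul, add_mul, mul_add, sub_mul,
      mul_sub, Matrix.mul_one, Matrix.one_mul, hBB]
    match_scalars <;> (try rw [hc]) <;> field_simp <;> (try ring)
  refine ⟨⟨⟨_, N, hMN, hNM⟩, rfl⟩, ?_⟩
  intro p y
  rw [Matrix.inv_eq_right_inv hMN, hN]
  have h1 : B *ᵥ (Aᵀ *ᵥ y) = a • (Aᵀ *ᵥ y) := by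
    rw [Matrix.mulVec_mulVec, hBAT, Matrix.smul_mulVec]
  have h2 : Aᵀ *ᵥ (A *ᵥ p) = B *ᵥ p := by
    rw [Matrix.mulVec_mulVec, hB]
  rw [Matrix.smul_mulVec, Matrix.sub_mulVec, Matrix.one_mulVec,
    Matrix.smul_mulVec, Matrix.mulVec_add, Matrix.mulVec_smul,
    Matrix.mulVec_smul, h1, Matrix.mulVec_sub, h2]
  match_scalars <;> (try rw [hc]) <;> field_simp <;> (try ring)
end

section
/- Consider the limit state-evolution (SE) recursion. Fix an iteration k ≥ 0 and an integer G ≥ 0, and suppose ψ_c^k = 0 for every c ∈ {1,…,Γ} with c ≤ G. Then for every c ∈ {1,…,Γ} with G < c ≤ G + W, the next-iteration effective noise satisfies τ_c^{k+1} ≤ R_all·ϑ·[∫_{(c−G)/W}^{1} F(x) dx + ((c−G)/W)·F(1)]^{−1}. (This is the key induction step in the proof of Proposition 1.) -/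
open MeasureTheory Finset

/-- Key pointwise inequality: if `F ≥ 0` is nonincreasing and `x ↦ x·F x` is
nondecreasing on `[0,∞)`, then `F t / W ≤ F σ / n` whenever `0 ≤ σ ≤ s ≤ 1`,
`0 ≤ t`, `0 < n ≤ W` and `n·s ≤ W·t`. -/
lemma se_key_div_ineq (F : ℝ → ℝ)
    (hF0 : ∀ x : ℝ, 0 ≤ x → 0 ≤ F x)
    (hanti : ∀ x y : ℝ, 0 ≤ x → x ≤ y → F y ≤ F x)
    (hmono : ∀ x y : ℝ, 0 ≤ x → x ≤ y → x * F x ≤ y * F y)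
    (σ s t n W : ℝ) (h0σ : 0 ≤ σ) (hσs : σ ≤ s) (hs1 : s ≤ 1)
    (ht0 : 0 ≤ t) (hn : 0 < n) (hnW : n ≤ W)
    (hcov : n * s ≤ W * t) : F t / W ≤ F σ / n := by
  have hW : (0:ℝ) < W := lt_of_lt_of_le hn hnW
  have h0s : 0 ≤ s := le_trans h0σ hσs
  rcases le_total s t with hst | hts
  · have h1 : F t ≤ F s := hanti s t h0s hst
    have h2 : F s ≤ F σ := hanti σ s h0σ hσs
    have h3 : 0 ≤ F t := hF0 t ht0
    calc F t / W ≤ F t / n := by gcongr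
      _ ≤ F σ / n := by
          gcongr
          linarith
  · rcases eq_or_lt_of_le ht0 with h0t | h0t
    · -- t = 0 forces s = 0 and σ = 0
      have hs0 : s ≤ 0 := by nlinarith
      have hσ0 : σ = 0 := le_antisymm (le_trans hσs hs0) h0σ
      have hss : s = 0 := le_antisymm hs0 h0s
      rw [← h0t, hσ0]
      have h3 : 0 ≤ F 0 := hF0 0 le_rfl
      gcongr
    · -- 0 < t ≤ s
      rw [div_le_div_iff₀ hW hn]
      have h1 : t * F t ≤ s * F s := hmono t s ht0 hts
      have h2 : F s ≤ F σ := hanti σ s h0σ hσs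
      have h3 : 0 ≤ F s := hF0 s h0s
      have e1 : n * (t * F t) ≤ n * (s * F s) :=
        mul_le_mul_of_nonneg_left h1 hn.le
      have e2 : (n * s) * F s ≤ (W * t) * F s :=
        mul_le_mul_of_nonneg_right hcov h3
      have e3 : (W * t) * F s ≤ (W * t) * F σ :=
        mul_le_mul_of_nonneg_left h2 (by positivity)
      nlinarith [e1, e2, e3]

/-- Basic properties of `F` coming from its integral representation. -/
lemma se_F_basic (ρ₀ : Measure ℝ) [IsProbabilityMeasure ρ₀]
    (K : Set ℝ) (hKc : IsCompact K) (hKs : K ⊆ Set.Ioi 0) (hKm : ρ₀ K = 1)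
    (σ₀ : ℝ) (hσ₀ : 0 < σ₀) (F : ℝ → ℝ)
    (hF : ∀ x, F x = ∫ l, l / (l * x + σ₀ ^ 2) ∂ρ₀) :
    (∀ x : ℝ, 0 ≤ x → 0 ≤ F x) ∧
    (∀ x y : ℝ, 0 ≤ x → x ≤ y → F y ≤ F x) ∧
    (∀ x y : ℝ, 0 ≤ x → x ≤ y → x * F x ≤ y * F y) ∧
    (0 < F 1) := by
  have hs2 : (0:ℝ) < σ₀ ^ 2 := by positivity
  -- a.e. every point is in K
  have hcompl : ρ₀ Kᶜ = 0 := by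
    have h := measure_compl hKc.isClosed.measurableSet (measure_ne_top ρ₀ K)
    rw [hKm] at h
    simp [h, measure_univ]
  have haeK : ∀ᵐ l ∂ρ₀, l ∈ K := by
    rw [ae_iff]
    simpa [Set.compl_def] using hcompl
  obtain ⟨M, hM⟩ : ∃ M, K ⊆ Metric.closedBall 0 M :=
    hKc.isBounded.subset_closedBall 0
  have hKle : ∀ l ∈ K, l ≤ |M| := by
    intro l hl
    have := hM hl
    rw [Metric.mem_closedBall, Real.dist_eq, sub_zero] at this
    exact le_trans (le_abs_self l) (le_trans this (le_abs_self M))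
  have hmeas : ∀ x : ℝ, AEStronglyMeasurable (fun l => l / (l * x + σ₀ ^ 2)) ρ₀ :=
    fun x => (measurable_id.div
      ((measurable_id.mul_const x).add_const (σ₀ ^ 2))).aestronglyMeasurable
  have hint : ∀ x : ℝ, 0 ≤ x → Integrable (fun l => l / (l * x + σ₀ ^ 2)) ρ₀ := by
    intro x hx
    refine (integrable_const (|M| / σ₀ ^ 2)).mono' (hmeas x) ?_
    filter_upwards [haeK] with l hl
    have hl0 : (0:ℝ) < l := hKs hl
    have hlM : l ≤ |M| := hKle l hl
    have hden : σ₀ ^ 2 ≤ l * x + σ₀ ^ 2 := by nlinarith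
    rw [Real.norm_eq_abs, abs_of_nonneg (by positivity)]
    calc l / (l * x + σ₀ ^ 2) ≤ l / σ₀ ^ 2 := by gcongr
      _ ≤ |M| / σ₀ ^ 2 := by gcongr
  refine ⟨?_, ?_, ?_, ?_⟩
  · intro x hx
    rw [hF]
    apply integral_nonneg_of_ae
    filter_upwards [haeK] with l hl
    have hl0 : (0:ℝ) < l := hKs hl
    positivity
  · intro x y hx hxy
    rw [hF, hF]
    apply integral_mono_ae (hint y (hx.trans hxy)) (hint x hx)
    filter_upwards [haeK] with l hl
    have hl0 : (0:ℝ) < l := hKs hl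
    have hdx : (0:ℝ) < l * x + σ₀ ^ 2 := by nlinarith
    have hdy : (0:ℝ) < l * y + σ₀ ^ 2 := by nlinarith
    rw [div_le_div_iff₀ hdy hdx]
    nlinarith [mul_nonneg (mul_nonneg hl0.le hl0.le) (sub_nonneg.2 hxy)]
  · intro x y hx hxy
    rw [hF, hF, ← integral_const_mul, ← integral_const_mul]
    apply integral_mono_ae ((hint x hx).const_mul x) ((hint y (hx.trans hxy)).const_mul y)
    filter_upwards [haeK] with l hl
    have hl0 : (0:ℝ) < l := hKs hl
    have hdx : (0:ℝ) < l * x + σ₀ ^ 2 := by nlinarith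
    have hdy : (0:ℝ) < l * y + σ₀ ^ 2 := by nlinarith
    rw [mul_div_assoc', mul_div_assoc', div_le_div_iff₀ hdx hdy]
    nlinarith [mul_nonneg (mul_nonneg (sub_nonneg.2 hxy) hl0.le) hs2.le]
  · have hKne : K.Nonempty := by
      rcases Set.eq_empty_or_nonempty K with h | h
      · exfalso; rw [h] at hKm; simp at hKm
      · exact h
    have hεK : sInf K ∈ K := hKc.sInf_mem hKne
    have hε0 : (0:ℝ) < sInf K := hKs hεK
    set ε := sInf K with hε
    have hlow : ∀ᵐ l ∂ρ₀, ε / (ε + σ₀ ^ 2) ≤ l / (l * 1 + σ₀ ^ 2) := by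
      filter_upwards [haeK] with l hl
      have hl0 : (0:ℝ) < l := hKs hl
      have hεl : ε ≤ l := csInf_le hKc.isBounded.bddBelow hl
      rw [mul_one, div_le_div_iff₀ (by nlinarith) (by nlinarith)]
      nlinarith
    have h1 : ε / (ε + σ₀ ^ 2) ≤ F 1 := by
      rw [hF]
      have := integral_mono_ae (integrable_const (ε / (ε + σ₀ ^ 2)))
        (hint 1 zero_le_one) hlow
      simpa [measure_univ] using this
    have h2 : (0:ℝ) < ε / (ε + σ₀ ^ 2) := by positivity
    linarith

/-- Key induction step in the proof of Proposition 1: if at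
iteration `k` one has `ψ_c^k = 0` for all `c ≤ G`, then for every block `c`
with `G < c ≤ G + W`, the next-iteration effective noise satisfies
`τ_c^{k+1} ≤ R_all·ϑ·[∫_{(c−G)/W}^{1} F(x) dx + ((c−G)/W)·F(1)]⁻¹`. -/
theorem se_induction_step
    (Γ W : ℕ) (hΓ : 1 ≤ Γ) (hW : 1 ≤ W)
    (ρ₀ : Measure ℝ) [IsProbabilityMeasure ρ₀]
    (hsupp : ∃ K : Set ℝ, IsCompact K ∧ K ⊆ Set.Ioi 0 ∧ ρ₀ K = 1)
    (σ₀ : ℝ) (hσ₀ : 0 < σ₀)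
    (F : ℝ → ℝ) (hF : ∀ x, F x = ∫ l, l / (l * x + σ₀ ^ 2) ∂ρ₀)
    (Rall : ℝ) (hRall : 0 < Rall)
    (ϑ : ℝ) (hϑ : ϑ = ((Γ : ℝ) + W - 1) / Γ)
    (Wset : ℕ → Finset ℕ)
    (hWset : ∀ r, Wset r = (Finset.Icc 1 Γ).filter fun c => r + 1 ≤ c + W ∧ c ≤ r)
    (σ φ τ ψ : ℕ → ℕ → ℝ)
    (hσ0 : ∀ r ∈ Finset.Icc 1 (Γ + W - 1), σ 0 r = 1)
    (hφ : ∀ k : ℕ, ∀ r ∈ Finset.Icc 1 (Γ + W - 1), φ k r = F (σ k r))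
    (hτ : ∀ k : ℕ, ∀ c ∈ Finset.Icc 1 Γ,
      τ k c = Rall * (∑ r ∈ Finset.Icc c (c + W - 1), φ k r / (ϑ * (Wset r).card))⁻¹)
    (hψ : ∀ k : ℕ, ∀ c ∈ Finset.Icc 1 Γ, ψ k c = if 1 / 2 < τ k c then 1 else 0)
    (hσrec : ∀ k : ℕ, ∀ r ∈ Finset.Icc 1 (Γ + W - 1),
      σ (k + 1) r = ((Wset r).card : ℝ)⁻¹ * ∑ c ∈ Wset r, ψ k c)
    (k G : ℕ)
    (hzero : ∀ c ∈ Finset.Icc 1 Γ, c ≤ G → ψ k c = 0) :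
    ∀ c ∈ Finset.Icc 1 Γ, G < c → c ≤ G + W →
      τ (k + 1) c ≤ Rall * ϑ *
        ((∫ x in (((c - G : ℕ) : ℝ) / W)..1, F x) +
          (((c - G : ℕ) : ℝ) / W) * F 1)⁻¹ := by
  obtain ⟨K, hKc, hKs, hKm⟩ := hsupp
  obtain ⟨hF0, hanti, hmono, hF1⟩ := se_F_basic ρ₀ K hKc hKs hKm σ₀ hσ₀ F hF
  intro c hc hGc hcGW
  rw [Finset.mem_Icc] at hc
  obtain ⟨hc1, hcΓ⟩ := hc
  have hWpos : (0:ℝ) < (W:ℝ) := by exact_mod_cast hW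
  have hΓpos : (0:ℝ) < (Γ:ℝ) := by exact_mod_cast hΓ
  have hϑ1 : (1:ℝ) ≤ ϑ := by
    rw [hϑ, le_div_iff₀ hΓpos]
    have hWR : (1:ℝ) ≤ (W:ℝ) := by exact_mod_cast hW
    linarith
  have hϑpos : (0:ℝ) < ϑ := lt_of_lt_of_le one_pos hϑ1
  set a : ℝ := ((c - G : ℕ) : ℝ) / (W : ℝ) with ha
  have hcG1 : 1 ≤ c - G := by omega
  have hcGW' : c - G ≤ W := by omega
  have ha0 : 0 < a := by
    rw [ha]
    have : (0:ℝ) < ((c - G : ℕ) : ℝ) := by exact_mod_cast hcG1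
    positivity
  have ha1 : a ≤ 1 := by
    rw [ha, div_le_one hWpos]
    exact_mod_cast hcGW'
  -- the truncated function g
  set g : ℝ → ℝ := fun x => F (min x 1) with hg
  have hganti : ∀ x y : ℝ, 0 ≤ x → x ≤ y → g y ≤ g x := by
    intro x y hx hxy
    exact hanti _ _ (le_min hx zero_le_one) (min_le_min hxy le_rfl)
  have hgintuv : ∀ u v : ℝ, 0 ≤ u → 0 ≤ v → IntervalIntegrable g volume u v := by
    intro u v hu hv
    apply AntitoneOn.intervalIntegrable
    intro x hx y hy hxy
    exact hganti x y (le_trans (le_min hu hv) hx.1) hxy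
  -- the partition points
  set p : ℕ → ℝ := fun j => ((c - G + j : ℕ) : ℝ) / (W : ℝ) with hp
  have hpnn : ∀ j, 0 ≤ p j := by
    intro j
    rw [hp]
    positivity
  have hp0 : p 0 = a := by simp [hp, ha]
  have hpW : p W = a + 1 := by
    rw [hp, ha]
    push_cast
    field_simp
  have hpsucc : ∀ j : ℕ, p (j + 1) = p j + 1 / (W : ℝ) := by
    intro j
    rw [hp]
    push_cast
    ring
  have hple : ∀ j : ℕ, p j ≤ p (j + 1) := by
    intro j
    rw [hpsucc j]
    have : (0:ℝ) < 1 / (W:ℝ) := by positivity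
    linarith
  -- the per-term bound
  have hterm : ∀ j ∈ Finset.range W,
      (∫ x in p j..p (j + 1), g x) / ϑ ≤
        φ (k + 1) (c + j) / (ϑ * ((Wset (c + j)).card : ℝ)) := by
    intro j hj
    rw [Finset.mem_range] at hj
    set r := c + j with hr
    have hrIcc : r ∈ Finset.Icc 1 (Γ + W - 1) := by
      rw [Finset.mem_Icc]; omega
    -- the window is nonempty
    have hminmem : min Γ r ∈ Wset r := by
      rw [hWset, Finset.mem_filter, Finset.mem_Icc]
      omega
    have hn1 : 1 ≤ (Wset r).card := Finset.card_pos.2 ⟨_, hminmem⟩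
    have hnW : (Wset r).card ≤ W := by
      have hsub : Wset r ⊆ Finset.Ioc (r - W) r := by
        intro x hx
        rw [hWset, Finset.mem_filter, Finset.mem_Icc] at hx
        rw [Finset.mem_Ioc]
        omega
      have := Finset.card_le_card hsub
      rw [Nat.card_Ioc] at this
      omega
    set m := ((Wset r).filter (fun c' => G < c')).card with hm
    have hmn : m ≤ (Wset r).card := Finset.card_filter_le _ _
    have hmrG : m ≤ r - G := by
      have hsub : (Wset r).filter (fun c' => G < c') ⊆ Finset.Icc (G + 1) r := by
        intro x hx
        rw [Finset.mem_filter, hWset, Finset.mem_filter, Finset.mem_Icc] at hx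
        rw [Finset.mem_Icc]
        omega
      have := Finset.card_le_card hsub
      rw [Nat.card_Icc] at this
      omega
    -- bounds on ψ
    have hψmem : ∀ c' ∈ Wset r, c' ∈ Finset.Icc 1 Γ := by
      intro c' hc'
      rw [hWset, Finset.mem_filter] at hc'
      exact hc'.1
    have hψ01 : ∀ c' ∈ Wset r, 0 ≤ ψ k c' ∧ ψ k c' ≤ 1 := by
      intro c' hc'
      rw [hψ k c' (hψmem c' hc')]
      split_ifs <;> norm_num
    have hψG : ∀ c' ∈ Wset r, c' ≤ G → ψ k c' = 0 :=
      fun c' hc' h => hzero c' (hψmem c' hc') h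
    -- sum bounds
    have hsum_le_m : ∑ c' ∈ Wset r, ψ k c' ≤ (m : ℝ) := by
      rw [← Finset.sum_filter_add_sum_filter_not (Wset r) (fun c' => G < c')]
      have h2 : ∑ c' ∈ (Wset r).filter (fun c' => ¬ G < c'), ψ k c' = 0 := by
        apply Finset.sum_eq_zero
        intro c' hc'
        rw [Finset.mem_filter] at hc'
        exact hψG c' hc'.1 (not_lt.1 hc'.2)
      have h1 : ∑ c' ∈ (Wset r).filter (fun c' => G < c'), ψ k c' ≤ (m : ℝ) := by
        have := Finset.sum_le_card_nsmul ((Wset r).filter (fun c' => G < c'))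
          (fun c' => ψ k c') 1
          (fun c' hc' => (hψ01 c' (Finset.mem_filter.1 hc').1).2)
        simpa [hm] using this
      linarith
    have hsum_le_n : ∑ c' ∈ Wset r, ψ k c' ≤ ((Wset r).card : ℝ) := by
      have := Finset.sum_le_card_nsmul (Wset r) (fun c' => ψ k c') 1
        (fun c' hc' => (hψ01 c' hc').2)
      simpa using this
    have hsum_nn : 0 ≤ ∑ c' ∈ Wset r, ψ k c' :=
      Finset.sum_nonneg (fun c' hc' => (hψ01 c' hc').1)
    -- the value σ (k+1) r
    have hσval : σ (k + 1) r = ((Wset r).card : ℝ)⁻¹ * ∑ c' ∈ Wset r, ψ k c' :=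
      hσrec k r hrIcc
    set nR : ℝ := ((Wset r).card : ℝ) with hnR
    have hnRpos : (0:ℝ) < nR := by
      rw [hnR]; exact_mod_cast hn1
    have hnRW : nR ≤ (W:ℝ) := by
      rw [hnR]; exact_mod_cast hnW
    have hσ'0 : 0 ≤ σ (k + 1) r := by
      rw [hσval]
      exact mul_nonneg (inv_nonneg.2 hnRpos.le) hsum_nn
    have hσ'1 : σ (k + 1) r ≤ 1 := by
      rw [hσval]
      rw [inv_mul_le_iff₀ hnRpos]
      simpa using hsum_le_n
    have hσ'm : σ (k + 1) r ≤ (m : ℝ) / nR := by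
      rw [hσval, div_eq_inv_mul]
      exact mul_le_mul_of_nonneg_left hsum_le_m (inv_nonneg.2 hnRpos.le)
    set s : ℝ := min 1 ((m : ℝ) / nR) with hs
    set t : ℝ := min 1 (p j) with ht
    have hσ's : σ (k + 1) r ≤ s := le_min hσ'1 hσ'm
    have hs1 : s ≤ 1 := min_le_left _ _
    have ht0 : 0 ≤ t := le_min zero_le_one (hpnn j)
    have hmWt : (m : ℝ) ≤ (W:ℝ) * t := by
      rcases le_total 1 (p j) with h | h
      · rw [ht, min_eq_left h, mul_one]
        calc (m:ℝ) ≤ nR := by rw [hnR]; exact_mod_cast hmn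
          _ ≤ (W:ℝ) := hnRW
      · rw [ht, min_eq_right h, hp, mul_div_cancel₀ _ hWpos.ne']
        have : m ≤ c - G + j := by omega
        exact_mod_cast this
    have hcov : nR * s ≤ (W:ℝ) * t := by
      calc nR * s ≤ nR * ((m : ℝ) / nR) :=
            mul_le_mul_of_nonneg_left (min_le_right _ _) hnRpos.le
        _ = (m : ℝ) := by field_simp
        _ ≤ (W:ℝ) * t := hmWt
    -- key inequality
    have hkey : F t / (W:ℝ) ≤ F (σ (k + 1) r) / nR :=
      se_key_div_ineq F hF0 hanti hmono (σ (k + 1) r) s t nR (W:ℝ)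
        hσ'0 hσ's hs1 ht0 hnRpos hnRW hcov
    -- integral bound
    have hintle : (∫ x in p j..p (j + 1), g x) ≤ F t / (W:ℝ) := by
      have hmon : ∀ x ∈ Set.Icc (p j) (p (j + 1)), g x ≤ F t := by
        intro x hx
        have hx0 : 0 ≤ x := le_trans (hpnn j) hx.1
        apply hanti t (min x 1) ht0
        exact le_min (le_trans (min_le_right _ _) hx.1) (min_le_left _ _)
      have := intervalIntegral.integral_mono_on (hple j)
        (hgintuv _ _ (hpnn j) (hpnn (j + 1)))
        (intervalIntegrable_const) hmon
      rw [intervalIntegral.integral_const] at this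
      calc (∫ x in p j..p (j + 1), g x) ≤ (p (j + 1) - p j) • F t := this
        _ = F t / (W:ℝ) := by
            rw [hpsucc j, smul_eq_mul]
            ring
    -- put together
    have hchain : (∫ x in p j..p (j + 1), g x) / ϑ ≤ (F (σ (k + 1) r) / nR) / ϑ := by
      gcongr
      exact le_trans hintle hkey
    calc (∫ x in p j..p (j + 1), g x) / ϑ ≤ (F (σ (k + 1) r) / nR) / ϑ := hchain
      _ = F (σ (k + 1) r) / (ϑ * nR) := by
          rw [div_div, mul_comm]
      _ = φ (k + 1) (c + j) / (ϑ * ((Wset (c + j)).card : ℝ)) := by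
          rw [hφ (k + 1) r hrIcc, hnR]
  -- rewrite the sum over Icc as a sum over range
  have hsplit : ∑ r ∈ Finset.Icc c (c + W - 1), φ (k + 1) r / (ϑ * ((Wset r).card : ℝ))
      = ∑ j ∈ Finset.range W, φ (k + 1) (c + j) / (ϑ * ((Wset (c + j)).card : ℝ)) := by
    have h1 : Finset.Icc c (c + W - 1) = Finset.Ico c (c + W) := by
      rw [← Finset.Ico_add_one_right_eq_Icc]
      congr 1
      omega
    rw [h1, Finset.sum_Ico_eq_sum_range]
    have h2 : c + W - c = W := by omega
    rw [h2]
  -- lower bound for the sum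
  have hadj : ∑ j ∈ Finset.range W, ∫ x in p j..p (j + 1), g x
      = ∫ x in a..(a + 1), g x := by
    rw [← hpW, ← hp0]
    exact intervalIntegral.sum_integral_adjacent_intervals
      (fun i _ => hgintuv _ _ (hpnn i) (hpnn (i + 1)))
  have hSlow : (∫ x in a..(a + 1), g x) / ϑ ≤
      ∑ r ∈ Finset.Icc c (c + W - 1), φ (k + 1) r / (ϑ * ((Wset r).card : ℝ)) := by
    rw [hsplit, ← hadj, Finset.sum_div]
    exact Finset.sum_le_sum hterm
  -- compute the integral of g
  have hsplitint : (∫ x in a..(a + 1), g x) = (∫ x in a..1, F x) + a * F 1 := by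
    have h1 : (∫ x in a..(1:ℝ), g x) = ∫ x in a..(1:ℝ), F x := by
      apply intervalIntegral.integral_congr
      intro x hx
      have hx1 : x ≤ 1 := by
        rcases hx with ⟨_, hx2⟩
        calc x ≤ max a 1 := hx2
          _ = 1 := max_eq_right ha1
      simp [hg, min_eq_left hx1]
    have h2 : (∫ x in (1:ℝ)..(a + 1), g x) = a * F 1 := by
      have he : (∫ x in (1:ℝ)..(a + 1), g x) = ∫ x in (1:ℝ)..(a + 1), F 1 := by
        apply intervalIntegral.integral_congr
        intro x hx
        have hx1 : 1 ≤ x := by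
          rcases hx with ⟨hx1, _⟩
          calc (1:ℝ) = min 1 (a + 1) := by
                rw [min_eq_left]; linarith
            _ ≤ x := hx1
        simp [hg, min_eq_right hx1]
      rw [he, intervalIntegral.integral_const, smul_eq_mul]
      ring
    rw [← intervalIntegral.integral_add_adjacent_intervals
      (hgintuv a 1 ha0.le zero_le_one) (hgintuv 1 (a + 1) zero_le_one (by linarith)),
      h1, h2]
  -- positivity of the denominator
  have hintnn : 0 ≤ ∫ x in a..1, F x :=
    intervalIntegral.integral_nonneg ha1 (fun u hu => hF0 u (le_trans ha0.le hu.1))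
  have hD : 0 < (∫ x in a..1, F x) + a * F 1 :=
    add_pos_of_nonneg_of_pos hintnn (mul_pos ha0 hF1)
  set D : ℝ := (∫ x in a..1, F x) + a * F 1 with hDdef
  -- final assembly
  have hmemc : c ∈ Finset.Icc 1 Γ := Finset.mem_Icc.2 ⟨hc1, hcΓ⟩
  rw [hτ (k + 1) c hmemc]
  have hS : D / ϑ ≤ ∑ r ∈ Finset.Icc c (c + W - 1),
      φ (k + 1) r / (ϑ * ((Wset r).card : ℝ)) := by
    rw [← hsplitint]
    exact hSlow
  have hDϑ : 0 < D / ϑ := div_pos hD hϑpos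
  have hSpos : 0 < ∑ r ∈ Finset.Icc c (c + W - 1),
      φ (k + 1) r / (ϑ * ((Wset r).card : ℝ)) := lt_of_lt_of_le hDϑ hS
  have hinv : (∑ r ∈ Finset.Icc c (c + W - 1),
      φ (k + 1) r / (ϑ * ((Wset r).card : ℝ)))⁻¹ ≤ (D / ϑ)⁻¹ :=
    inv_anti₀ hDϑ hS
  calc Rall * (∑ r ∈ Finset.Icc c (c + W - 1),
        φ (k + 1) r / (ϑ * ((Wset r).card : ℝ)))⁻¹
      ≤ Rall * (D / ϑ)⁻¹ := mul_le_mul_of_nonneg_left hinv hRall.le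
    _ = Rall * ϑ * D⁻¹ := by
        rw [inv_div]
        ring
end
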